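/- Let 𝔤 be a finite-dimensional real Lie algebra equipped with a positive-definite invariant symmetric bilinear form B. Then the derived algebra ⁅𝔤,𝔤⁆, regarded as a Lie algebra in its own right, is semisimple. -/

import Mathlib

theorem aux_semisimple
    (M : Type*) [LieRing M] [LieAlgebra ℝ M] [FiniteDimensional ℝ M]
    (B : M →ₗ[ℝ] M →ₗ[ℝ] ℝ)
    (hsymm : ∀ x y : M, B x y = B y x)
    (hinv : ∀ x y z : M, B ⁅x, y⁆ z = B x ⁅y, z⁆)
    (hpos : ∀ x : M, x ≠ 0 → 0 < B x x)
    (hperf : ⁅(⊤ : LieIdeal ℝ M), (⊤ : LieIdeal ℝ M)⁆ = ⊤) :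
    LieAlgebra.IsSemisimple ℝ M := by
  have hB0 : ∀ x : M, B x x = 0 → x = 0 := by
    intro x hx
    by_contra h
    exact (hpos x h).ne' hx
  have hnondeg : LinearMap.BilinForm.Nondegenerate (B : LinearMap.BilinForm ℝ M) :=
    ⟨fun x hx => hB0 x (hx x), fun x hx => hB0 x (hx x)⟩
  have hrefl : LinearMap.BilinForm.IsRefl (B : LinearMap.BilinForm ℝ M) :=
    fun x y h => by rw [hsymm]; exact h
  have hlieinv : LinearMap.BilinForm.lieInvariant M (B : LinearMap.BilinForm ℝ M) := by
    intro x y z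
    have hskew : ⁅x, y⁆ = -⁅y, x⁆ := neg_eq_iff_eq_neg.mp (lie_skew y x)
    rw [hskew, map_neg, LinearMap.neg_apply, hinv y x z]
  have habs : ∀ I : LieIdeal ℝ M, IsLieAbelian I → I = ⊥ := by
    intro I hab
    rw [eq_bot_iff]
    intro x hx
    rw [LieSubmodule.mem_bot]
    have hcent : ∀ y : M, ⁅x, y⁆ = 0 := by
      intro y
      have hxy : ⁅x, y⁆ ∈ I := lie_mem_left ℝ M I x y hx
      have hzero : ⁅x, ⁅x, y⁆⁆ = 0 := by
        have h1 : (⁅(⟨x, hx⟩ : I), (⟨⁅x, y⁆, hxy⟩ : I)⁆ : I) = 0 := trivial_lie_zero _ _ _ _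
        have h2 : ⁅x, ⁅x, y⁆⁆ = (I.incl ⁅(⟨x, hx⟩ : I), (⟨⁅x, y⁆, hxy⟩ : I)⁆ : M) := by
          rw [LieHom.map_lie]; rfl
        rw [h2, h1, map_zero]
      have h := hinv y x ⁅x, y⁆
      rw [hzero, map_zero] at h
      have hskew : ⁅x, y⁆ = -⁅y, x⁆ := neg_eq_iff_eq_neg.mp (lie_skew y x)
      have hBB : B ⁅x, y⁆ ⁅x, y⁆ = -B ⁅y, x⁆ ⁅x, y⁆ := by
        rw [hskew]; simp only [map_neg, LinearMap.neg_apply, neg_neg]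
      exact hB0 _ (by rw [hBB, h, neg_zero])
    have hall : ∀ z : M, B z x = 0 := by
      have hspan : (⊤ : Submodule ℝ M) = Submodule.span ℝ
          {m : M | ∃ (a : (⊤ : LieIdeal ℝ M)) (b : (⊤ : LieIdeal ℝ M)), ⁅(a : M), (b : M)⁆ = m} := by
        conv_lhs => rw [← LieSubmodule.top_toSubmodule (R := ℝ) (L := M) (M := M), ← hperf]
        exact LieSubmodule.lieIdeal_oper_eq_linear_span ⊤ ⊤
      intro z
      have hz : z ∈ Submodule.span ℝ
          {m : M | ∃ (a : (⊤ : LieIdeal ℝ M)) (b : (⊤ : LieIdeal ℝ M)), ⁅(a : M), (b : M)⁆ = m} := by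
        rw [← hspan]; trivial
      induction hz using Submodule.span_induction with
      | mem m hm =>
          obtain ⟨a, b, rfl⟩ := hm
          rw [hinv]
          have hb : ⁅(b : M), x⁆ = 0 := by
            rw [← lie_skew, hcent, neg_zero]
          rw [hb]; simp
      | zero => simp
      | add u v _ _ hu hv => simp [hu, hv]
      | smul t u _ hu => simp [hu]
    exact hB0 x (hall x)
  exact LieAlgebra.InvariantForm.isSemisimple_of_nondegenerate B hnondeg hlieinv hrefl
    (fun I hI hab => hI.1 (habs I hab))

/-- For a finite-dimensional real Lie algebra with a positive-definite invariant
symmetric bilinear form, the derived algebra, regarded as a Lie algebra in its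
own right, is semisimple. -/
theorem derived_algebra_semisimple
    (L : Type*) [LieRing L] [LieAlgebra ℝ L] [FiniteDimensional ℝ L]
    (B : L →ₗ[ℝ] L →ₗ[ℝ] ℝ)
    (hsymm : ∀ x y : L, B x y = B y x)
    (hinv : ∀ x y z : L, B ⁅x, y⁆ z = B x ⁅y, z⁆)
    (hpos : ∀ x : L, x ≠ 0 → 0 < B x x) :
    LieAlgebra.IsSemisimple ℝ ↥(⁅(⊤ : LieIdeal ℝ L), (⊤ : LieIdeal ℝ L)⁆) := by
  set I : LieIdeal ℝ L := ⁅(⊤ : LieIdeal ℝ L), (⊤ : LieIdeal ℝ L)⁆ with hIdef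
  have hB0 : ∀ x : L, B x x = 0 → x = 0 := by
    intro x hx
    by_contra h
    exact (hpos x h).ne' hx
  -- the restricted form
  set B' : ↥I →ₗ[ℝ] ↥I →ₗ[ℝ] ℝ := LinearMap.compl₁₂ B I.incl.toLinearMap I.incl.toLinearMap
    with hB'def
  have hB'apply : ∀ x y : ↥I, B' x y = B (x : L) (y : L) := fun x y => rfl
  have hcoe : ∀ x y : ↥I, ((⁅x, y⁆ : ↥I) : L) = ⁅(x : L), (y : L)⁆ := by
    intro x y
    exact I.incl.map_lie x y
  have hlieinv : LinearMap.BilinForm.lieInvariant L (B : LinearMap.BilinForm ℝ L) := by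
    intro x y z
    have hskew : ⁅x, y⁆ = -⁅y, x⁆ := neg_eq_iff_eq_neg.mp (lie_skew y x)
    rw [hskew, map_neg, LinearMap.neg_apply, hinv y x z]
  have hrefl : LinearMap.BilinForm.IsRefl (B : LinearMap.BilinForm ℝ L) :=
    fun x y h => by rw [hsymm]; exact h
  set O : LieIdeal ℝ L := LieAlgebra.InvariantForm.orthogonal B hlieinv I with hOdef
  have hmemO : ∀ {v : L}, v ∈ O ↔ ∀ n ∈ I, B n v = 0 := fun {v} =>
    LieAlgebra.InvariantForm.mem_orthogonal B hlieinv I v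
  have hIO : ∀ v : L, v ∈ I → v ∈ O → v = 0 := fun v hvI hvO => hB0 v (hmemO.mp hvO v hvI)
  have hdisj : Disjoint I.toSubmodule
      (LinearMap.BilinForm.orthogonal (B : LinearMap.BilinForm ℝ L) I.toSubmodule) := by
    rw [Submodule.disjoint_def]
    intro v hvI hvO
    exact hB0 v ((LinearMap.BilinForm.mem_orthogonal_iff.mp hvO) v hvI)
  have hcompl : IsCompl I.toSubmodule
      (LinearMap.BilinForm.orthogonal (B : LinearMap.BilinForm ℝ L) I.toSubmodule) :=
    (LinearMap.BilinForm.isCompl_orthogonal_iff_disjoint hrefl).mpr hdisj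
  have htop : I.toSubmodule ⊔ O.toSubmodule = ⊤ := by
    rw [hOdef, LieAlgebra.InvariantForm.orthogonal_toSubmodule]
    exact hcompl.codisjoint.eq_top
  have hdecomp : ∀ x : L, ∃ p ∈ I, ∃ q ∈ O, x = p + q := by
    intro x
    have hx : x ∈ I.toSubmodule ⊔ O.toSubmodule := htop ▸ Submodule.mem_top
    obtain ⟨p, hp, q, hq, hpq⟩ := Submodule.mem_sup.mp hx
    exact ⟨p, hp, q, hq, hpq.symm⟩
  have hIOz : ∀ a ∈ I, ∀ d ∈ O, ⁅a, d⁆ = 0 := fun a ha d hd =>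
    hIO _ (lie_mem_left ℝ L I a d ha) (lie_mem_right ℝ L O a d hd)
  have hOIz : ∀ b ∈ O, ∀ c ∈ I, ⁅b, c⁆ = 0 := by
    intro b hb c hc
    rw [← lie_skew, hIOz c hc b hb, neg_zero]
  have hOOz : ∀ b ∈ O, ∀ d ∈ O, ⁅b, d⁆ = 0 := by
    intro b hb d hd
    refine hIO _ ?_ (lie_mem_right ℝ L O b d hd)
    rw [hIdef]
    exact LieSubmodule.lie_mem_lie (I := (⊤ : LieIdeal ℝ L)) (N := (⊤ : LieIdeal ℝ L))
      (LieSubmodule.mem_top b) (LieSubmodule.mem_top d)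
  have hperf' : ⁅(⊤ : LieIdeal ℝ ↥I), (⊤ : LieIdeal ℝ ↥I)⁆ = ⊤ := by
    rw [eq_top_iff]
    intro z _
    set J : LieIdeal ℝ ↥I := ⁅(⊤ : LieIdeal ℝ ↥I), (⊤ : LieIdeal ℝ ↥I)⁆ with hJdef
    set T : Submodule ℝ L := Submodule.map I.incl.toLinearMap J.toSubmodule with hTdef
    have hIT : I.toSubmodule ≤ T := by
      have hspan : I.toSubmodule = Submodule.span ℝ
          {m : L | ∃ (a : (⊤ : LieIdeal ℝ L)) (b : (⊤ : LieIdeal ℝ L)), ⁅(a : L), (b : L)⁆ = m} := by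
        conv_lhs => rw [hIdef]
        exact LieSubmodule.lieIdeal_oper_eq_linear_span ⊤ ⊤
      rw [hspan, Submodule.span_le]
      rintro _ ⟨a, b, rfl⟩
      obtain ⟨p, hp, q, hq, hx⟩ := hdecomp (a : L)
      obtain ⟨r, hr, s, hs, hy⟩ := hdecomp (b : L)
      have hbr : ⁅(a : L), (b : L)⁆ = ⁅p, r⁆ := by
        rw [hx, hy, add_lie, lie_add, lie_add, hIOz p hp s hs, hOIz q hq r hr,
          hOOz q hq s hs, add_zero, add_zero, add_zero]
      rw [hbr]
      have hw : (⁅(⟨p, hp⟩ : ↥I), (⟨r, hr⟩ : ↥I)⁆ : ↥I) ∈ J := by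
        rw [hJdef]
        exact LieSubmodule.lie_mem_lie (I := (⊤ : LieIdeal ℝ ↥I)) (N := (⊤ : LieIdeal ℝ ↥I))
          (LieSubmodule.mem_top _) (LieSubmodule.mem_top _)
      exact Submodule.mem_map.mpr ⟨_, (LieSubmodule.mem_toSubmodule J).mpr hw, hcoe _ _⟩
    obtain ⟨w, hwJ, hwz⟩ := Submodule.mem_map.mp (hIT z.2)
    have : w = z := Subtype.ext hwz
    rw [← this]
    exact (LieSubmodule.mem_toSubmodule J).mp hwJ
  haveI : FiniteDimensional ℝ ↥I := FiniteDimensional.finiteDimensional_submodule I.toSubmodule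
  refine aux_semisimple ↥I B' ?_ ?_ ?_ hperf'
  · intro x y
    rw [hB'apply, hB'apply, hsymm]
  · intro x y z
    rw [hB'apply, hB'apply, hcoe, hcoe, hinv]
  · intro x hx
    have hx' : (x : L) ≠ 0 := fun h0 => hx (Subtype.ext h0)
    rw [hB'apply]
    exact hpos _ hx'
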